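/- Let A be a based quasi-hereditary superalgebra over a field F with heredity data (I,X,Y), let V be a finitely generated A-supermodule, let v_1,…,v_t ∈ V be homogeneous elements, and set V_0 := 0 and V_s := A⟨v_1,…,v_s⟩ for s=1,…,t. Suppose: (1) V_t = V; (2) for each s=1,…,t there exists i_s ∈ I such that e_{i_s}v_s − v_s ∈ V_{s−1} and yv_s ∈ V_{s−1} for all y ∈ Y∖{e_{i_s}}; (3) dim V = Σ_{s=1}^t dim Δ(i_s). Then V_s/V_{s−1} is evenly isomorphic to Π^{|v_s|}Δ(i_s) for all s=1,…,t; in particular V has a standard filtration. -/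

import Mathlib

/-!
STATEMENT 3: criterion for a standard filtration (Corollary `FiltCriteria`).
-/

open scoped Classical

/-- Heredity data `(I, X, Y)` on a `ℤ/2`-graded `k`-superalgebra `A` (with grading `𝒜`),
making `A` a based quasi-hereditary superalgebra (Kleshchev–Muth).  The sets `X i`, `Y i`
consist of homogeneous elements, with distinguished initial elements `e i ∈ X i ∩ Y i`;
`B = {x * y | i ∈ I, x ∈ X i, y ∈ Y i}` is a `k`-basis of `A`; left/right multiplication is
triangular modulo `A^{> i} = span {x * y | j > i, x ∈ X j, y ∈ Y j}`; and the idempotent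
axioms (c) hold. -/
structure HeredityData (k A : Type) [CommRing k] [Ring A] [Algebra k A]
    (𝒜 : ZMod 2 → Submodule k A)
    (I : Type) [Fintype I] [PartialOrder I] : Type where
  X : I → Finset A
  Y : I → Finset A
  e : I → A
  e_mem_X : ∀ i, e i ∈ X i
  e_mem_Y : ∀ i, e i ∈ Y i
  homog_X : ∀ i, ∀ x ∈ X i, ∃ ε : ZMod 2, x ∈ 𝒜 ε
  homog_Y : ∀ i, ∀ y ∈ Y i, ∃ ε : ZMod 2, y ∈ 𝒜 ε
  /-- (a): the products `x * y` form a `k`-basis of `A`: they are linearly independent … -/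
  basis_indep : LinearIndependent k
    (fun p : Σ i : I, {q : A × A // q ∈ X i ×ˢ Y i} => p.2.1.1 * p.2.1.2)
  /-- (a): … and they span `A`. -/
  basis_span :
    Submodule.span k {a : A | ∃ i, ∃ x ∈ X i, ∃ y ∈ Y i, a = x * y} = ⊤
  /-- (b): `a * x` is, modulo `A^{> i}`, a `k`-linear combination of elements of `X i`. -/
  left_coeffs : ∀ i, ∀ x ∈ X i, ∀ a : A,
    a * x ∈ Submodule.span k ((X i : Set A) ∪
      {b : A | ∃ j, i < j ∧ ∃ x' ∈ X j, ∃ y' ∈ Y j, b = x' * y'})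
  /-- (b): `y * a` is, modulo `A^{> i}`, a `k`-linear combination of elements of `Y i`. -/
  right_coeffs : ∀ i, ∀ y ∈ Y i, ∀ a : A,
    y * a ∈ Submodule.span k ((Y i : Set A) ∪
      {b : A | ∃ j, i < j ∧ ∃ x' ∈ X j, ∃ y' ∈ Y j, b = x' * y'})
  /-- (c): `x * e i = x`. -/
  x_mul_e : ∀ i, ∀ x ∈ X i, x * e i = x
  /-- (c): `e i * x = δ_{x, e i} x`. -/
  e_mul_x : ∀ i, ∀ x ∈ X i, e i * x = if x = e i then x else 0
  /-- (c): `e i * y = y`. -/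
  e_mul_y : ∀ i, ∀ y ∈ Y i, e i * y = y
  /-- (c): `y * e i = δ_{y, e i} y`. -/
  y_mul_e : ∀ i, ∀ y ∈ Y i, y * e i = if y = e i then y else 0
  /-- (c): `e j * x = x` or `0`. -/
  e_mul_x' : ∀ i j, ∀ x ∈ X i, e j * x = x ∨ e j * x = 0
  /-- (c): `y * e j = y` or `0`. -/
  y_mul_e' : ∀ i j, ∀ y ∈ Y i, y * e j = y ∨ y * e j = 0

variable (F A : Type) [Field F] [Ring A] [Algebra F A]
  (𝒜 : ZMod 2 → Submodule F A)
  (I : Type) [Fintype I] [PartialOrder I]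

/-- The (left ideal) `A^{> i}`, generated by the products `x * y` with `x ∈ X j`,
`y ∈ Y j`, `j > i` (it is in fact a two-sided ideal of `A`). -/
def hgtIdeal (H : HeredityData F A 𝒜 I) (i : I) : Submodule A A :=
  Submodule.span A {b : A | ∃ j, i < j ∧ ∃ x ∈ H.X j, ∃ y ∈ H.Y j, b = x * y}

/-- The quotient superalgebra `Ã = A / A^{> i}` as a left `A`-module. -/
abbrev DeltaQuot (H : HeredityData F A 𝒜 I) (i : I) : Type :=
  A ⧸ hgtIdeal F A 𝒜 I H i

/-- The standard module `Δ(i) = Ã ẽ_i = A · (e i + A^{> i}) ⊆ A / A^{> i}`. -/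
def stdDelta (H : HeredityData F A 𝒜 I) (i : I) :
    Submodule A (DeltaQuot F A 𝒜 I H i) :=
  Submodule.span A {Submodule.Quotient.mk (H.e i)}

/-- The induced `ℤ/2`-grading on the standard module `Δ(i)`. -/
def grDelta (H : HeredityData F A 𝒜 I) (i : I) (ε : ZMod 2) :
    Set ↥(stdDelta F A 𝒜 I H i) :=
  {q | ∃ a ∈ 𝒜 ε, (Submodule.Quotient.mk a : DeltaQuot F A 𝒜 I H i) = (q : DeltaQuot F A 𝒜 I H i)}

/-- A homogeneous `A`-supermodule homomorphism of parity `δ`:  an `F`-linear map `f`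
shifting the gradings by `δ` and satisfying `f (a • x) = (-1)^{|f||a|} a • f x` for
homogeneous `a`.  (An even isomorphism `V ≅ Π^δ W` is the same thing as a bijective
such map `V → W` of parity `δ`.) -/
def IsSuperHom (V W : Type) [AddCommGroup V] [Module F V] [Module A V]
    [AddCommGroup W] [Module F W] [Module A W]
    (gV : ZMod 2 → Set V) (gW : ZMod 2 → Set W) (δ : ZMod 2) (f : V →ₗ[F] W) : Prop :=
  (∀ ε : ZMod 2, ∀ x ∈ gV ε, f x ∈ gW (ε + δ)) ∧
  ∀ ε : ZMod 2, ∀ a ∈ 𝒜 ε, ∀ x : V,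
    f (a • x) = (if ε * δ = 1 then -(a • f x) else a • f x)


section Sigma
variable (F A : Type) [Field F] [Ring A] [Algebra F A]
  (𝒜 : ZMod 2 → Submodule F A) [GradedAlgebra 𝒜]

lemma zmod2_cases (x : ZMod 2) : x = 0 ∨ x = 1 := by revert x; decide

def sgn (δ ε : ZMod 2) : F := if ε * δ = 1 then -1 else 1

lemma sgn_sq (δ ε : ZMod 2) : sgn F δ ε * sgn F δ ε = 1 := by
  unfold sgn; split <;> ring

lemma sgn_add (δ ε η : ZMod 2) : sgn F δ (ε + η) = sgn F δ ε * sgn F δ η := by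
  rcases zmod2_cases δ with h | h <;> rcases zmod2_cases ε with h1 | h1 <;>
    rcases zmod2_cases η with h2 | h2 <;> subst h h1 h2 <;> simp [sgn]

noncomputable def sigmaMap (δ : ZMod 2) : A →ₗ[F] A :=
  ∑ ε : ZMod 2, sgn F δ ε • ((𝒜 ε).subtype ∘ₗ
    (DirectSum.component F (ZMod 2) (fun ε => ↥(𝒜 ε)) ε) ∘ₗ
    (DirectSum.decomposeLinearEquiv 𝒜).toLinearMap)

lemma sigmaMap_of_mem {δ ε : ZMod 2} {a : A} (h : a ∈ 𝒜 ε) :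
    sigmaMap F A 𝒜 δ a = sgn F δ ε • a := by
  simp only [sigmaMap, LinearMap.sum_apply, LinearMap.smul_apply, LinearMap.comp_apply,
    LinearEquiv.coe_coe, DirectSum.decomposeLinearEquiv_apply]
  rw [Finset.sum_eq_single ε]
  · simp only [← DirectSum.apply_eq_component, Submodule.coe_subtype,
      DirectSum.decompose_of_mem_same 𝒜 h]
  · intro b _ hb
    have h0 : ((DirectSum.decompose 𝒜 a) b : A) = 0 := by
      rw [DirectSum.decompose_of_mem_ne 𝒜 h hb.symm]
    simp only [← DirectSum.apply_eq_component, Submodule.coe_subtype, h0, smul_zero]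
  · simp

lemma sigmaMap_mul (δ : ZMod 2) (a b : A) :
    sigmaMap F A 𝒜 δ (a * b) = sigmaMap F A 𝒜 δ a * sigmaMap F A 𝒜 δ b := by
  induction a using DirectSum.Decomposition.inductionOn 𝒜 with
  | zero => simp
  | @homogeneous ε x =>
    induction b using DirectSum.Decomposition.inductionOn 𝒜 with
    | zero => simp
    | @homogeneous η y =>
      rw [sigmaMap_of_mem F A 𝒜 (ε := ε + η) (SetLike.mul_mem_graded x.2 y.2),
        sigmaMap_of_mem F A 𝒜 x.2, sigmaMap_of_mem F A 𝒜 y.2, sgn_add,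
        smul_mul_assoc, mul_smul_comm, smul_smul]
    | add b1 b2 hb1 hb2 =>
      rw [mul_add, map_add, map_add, hb1, hb2, mul_add]
  | add a1 a2 ha1 ha2 =>
    rw [add_mul, map_add, map_add, ha1, ha2, add_mul]

lemma sigmaMap_sigmaMap (δ : ZMod 2) (a : A) :
    sigmaMap F A 𝒜 δ (sigmaMap F A 𝒜 δ a) = a := by
  induction a using DirectSum.Decomposition.inductionOn 𝒜 with
  | zero => simp
  | @homogeneous ε x =>
    rw [sigmaMap_of_mem F A 𝒜 x.2, map_smul, sigmaMap_of_mem F A 𝒜 x.2, smul_smul,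
      sgn_sq, one_smul]
  | add a1 a2 ha1 ha2 => rw [map_add, map_add, ha1, ha2]

end Sigma

/-- **criterion for a standard filtration.**
Let `V` be a finitely generated `A`-supermodule, `v 0, …, v (t-1) ∈ V` homogeneous
elements of parities `pv 0, …, pv (t-1)`, and `Vs s := A⟨v 0, …, v (s-1)⟩`.  Suppose
(1) `Vs t = V`; (2) for each `s` there is `is s ∈ I` with
`e (is s) • v s - v s ∈ Vs s` and `y • v s ∈ Vs s` for all `y ∈ Y ∖ {e (is s)}`;
(3) `dim V = Σ_s dim Δ(is s)`.  Then for every `s`, the subquotient `Vs (s+1) / Vs s`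
is evenly isomorphic to `Π^{pv s} Δ(is s)`, i.e. there is a bijective homogeneous
`A`-supermodule homomorphism `Δ(is s) → Vs (s+1) / Vs s` of parity `pv s`.
In particular `V` has a standard filtration. -/
theorem stmt3
    [GradedAlgebra 𝒜]
    (H : HeredityData F A 𝒜 I)
    (V : Type) [AddCommGroup V] [Module F V] [Module A V] [IsScalarTower F A V]
    [Module.Finite A V] [FiniteDimensional F V]
    (𝒱 : ZMod 2 → Submodule F V) [DirectSum.Decomposition 𝒱]
    (hact : ∀ (ε δ : ZMod 2) (a : A) (x : V), a ∈ 𝒜 ε → x ∈ 𝒱 δ → a • x ∈ 𝒱 (ε + δ))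
    (t : ℕ) (v : Fin t → V) (pv : Fin t → ZMod 2)
    (hv_homog : ∀ s, v s ∈ 𝒱 (pv s))
    (Vs : ℕ → Submodule A V)
    (hVs : ∀ s : ℕ, Vs s = Submodule.span A (v '' {r : Fin t | (r : ℕ) < s}))
    (is : Fin t → I)
    (h1 : Vs t = ⊤)
    (h2 : ∀ s : Fin t, H.e (is s) • v s - v s ∈ Vs s ∧
      ∀ j, ∀ y ∈ H.Y j, y ≠ H.e (is s) → y • v s ∈ Vs s)
    (h3 : Module.finrank F V = ∑ s : Fin t, Module.finrank F ↥(stdDelta F A 𝒜 I H (is s))) :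
    ∀ s : Fin t,
      ∃ f : ↥(stdDelta F A 𝒜 I H (is s)) →ₗ[F]
        (↥(Vs (s + 1)) ⧸ Submodule.comap (Vs (s + 1)).subtype (Vs s)),
      Function.Bijective f ∧
      IsSuperHom F A 𝒜 ↥(stdDelta F A 𝒜 I H (is s))
        (↥(Vs (s + 1)) ⧸ Submodule.comap (Vs (s + 1)).subtype (Vs s))
        (grDelta F A 𝒜 I H (is s))
        (fun ε => {q | ∃ z : V, z ∈ 𝒱 ε ∧ ∃ hz : z ∈ Vs (s + 1),
          Submodule.Quotient.mk (⟨z, hz⟩ : ↥(Vs (s + 1))) = q})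
        (pv s) f := by
  classical
  -- distinctness of initial elements
  have key_ne : ∀ i j : I, i ≠ j → ∀ y ∈ H.Y j, y ≠ H.e i := by
    intro i j hij y hy hcon
    subst hcon
    have hmem1 : (H.e i, H.e i) ∈ H.X i ×ˢ H.Y i :=
      Finset.mem_product.2 ⟨H.e_mem_X i, H.e_mem_Y i⟩
    have hmem2 : (H.e j, H.e i) ∈ H.X j ×ˢ H.Y j :=
      Finset.mem_product.2 ⟨H.e_mem_X j, hy⟩
    have hval : (fun p : Σ i : I, {q : A × A // q ∈ H.X i ×ˢ H.Y i} => p.2.1.1 * p.2.1.2)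
        (⟨i, ⟨(H.e i, H.e i), hmem1⟩⟩ : Σ i : I, {q : A × A // q ∈ H.X i ×ˢ H.Y i}) =
        (fun p : Σ i : I, {q : A × A // q ∈ H.X i ×ˢ H.Y i} => p.2.1.1 * p.2.1.2)
        (⟨j, ⟨(H.e j, H.e i), hmem2⟩⟩ : Σ i : I, {q : A × A // q ∈ H.X i ×ˢ H.Y i}) := by
      simp only
      rw [H.x_mul_e i (H.e i) (H.e_mem_X i), H.e_mul_y j (H.e i) hy]
    have := H.basis_indep.injective hval
    exact hij (congrArg Sigma.fst this)
  -- per-s construction of a surjective super-homomorphism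
  have main : ∀ s : Fin t,
      ∃ f : ↥(stdDelta F A 𝒜 I H (is s)) →ₗ[F]
        (↥(Vs (s + 1)) ⧸ Submodule.comap (Vs (s + 1)).subtype (Vs s)),
      Function.Surjective f ∧
      IsSuperHom F A 𝒜 ↥(stdDelta F A 𝒜 I H (is s))
        (↥(Vs (s + 1)) ⧸ Submodule.comap (Vs (s + 1)).subtype (Vs s))
        (grDelta F A 𝒜 I H (is s))
        (fun ε => {q | ∃ z : V, z ∈ 𝒱 ε ∧ ∃ hz : z ∈ Vs (s + 1),
          Submodule.Quotient.mk (⟨z, hz⟩ : ↥(Vs (s + 1))) = q})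
        (pv s) f := by
    intro s
    set i := is s with hi
    set δ := pv s with hδ
    obtain ⟨εe, hεe⟩ := H.homog_X i (H.e i) (H.e_mem_X i)
    have hvmem : v s ∈ Vs (↑s + 1) := by
      rw [hVs]; exact Submodule.subset_span ⟨s, by simp, rfl⟩
    have hle : Vs ↑s ≤ Vs (↑s + 1) := by
      rw [hVs, hVs]
      exact Submodule.span_mono (Set.image_mono (fun r hr => Nat.lt_succ_of_lt hr))
    have hgt_act : ∀ a ∈ hgtIdeal F A 𝒜 I H i, a • v s ∈ Vs ↑s := by
      intro a ha
      induction ha using Submodule.span_induction with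
      | mem b hb =>
        obtain ⟨j, hij, x, hx, y, hy, rfl⟩ := hb
        rw [mul_smul]
        exact Submodule.smul_mem _ x ((h2 s).2 j y hy (key_ne i j (ne_of_lt hij) y hy))
      | zero => simpa using (Vs ↑s).zero_mem
      | add b c _ _ hb hc => rw [add_smul]; exact (Vs ↑s).add_mem hb hc
      | smul r b _ hb => rw [smul_eq_mul, mul_smul]; exact (Vs ↑s).smul_mem r hb
    have hFsmul : ∀ (c : F) (W : Submodule A V) (w : V), w ∈ W → c • w ∈ W := by
      intro c W w hw
      rw [← algebraMap_smul A c w]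
      exact W.smul_mem _ hw
    have hσ_act : ∀ a ∈ hgtIdeal F A 𝒜 I H i, sigmaMap F A 𝒜 δ a • v s ∈ Vs ↑s := by
      intro a ha
      induction ha using Submodule.span_induction with
      | mem b hb =>
        obtain ⟨j, hij, x, hx, y, hy, rfl⟩ := hb
        obtain ⟨εx, hεx⟩ := H.homog_X j x hx
        obtain ⟨εy, hεy⟩ := H.homog_Y j y hy
        rw [sigmaMap_of_mem F A 𝒜 (SetLike.mul_mem_graded hεx hεy), smul_assoc]
        refine hFsmul _ _ _ ?_
        rw [mul_smul]
        exact Submodule.smul_mem _ x ((h2 s).2 j y hy (key_ne i j (ne_of_lt hij) y hy))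
      | zero => simpa using (Vs ↑s).zero_mem
      | add b c _ _ hb hc => rw [map_add, add_smul]; exact (Vs ↑s).add_mem hb hc
      | smul r b _ hb =>
        rw [smul_eq_mul, sigmaMap_mul, mul_smul]
        exact (Vs ↑s).smul_mem _ hb
    have hsmem : ∀ a : A, sigmaMap F A 𝒜 δ a • v s ∈ Vs (↑s + 1) :=
      fun a => Submodule.smul_mem _ _ hvmem
    set μ : A →ₗ[F] ↥(Vs (↑s + 1)) :=
      { toFun := fun a => ⟨sigmaMap F A 𝒜 δ a • v s, hsmem a⟩
        map_add' := by intro a b; ext; simp [add_smul]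
        map_smul' := by intro c a; ext; simp [smul_assoc] } with hμ
    set N := Submodule.comap (Vs (↑s + 1)).subtype (Vs ↑s) with hNdef
    set φ : A →ₗ[F] (↥(Vs (↑s + 1)) ⧸ N) := (N.mkQ.restrictScalars F).comp μ with hφ
    have hker : (hgtIdeal F A 𝒜 I H i).restrictScalars F ≤ LinearMap.ker φ := by
      intro a ha
      simp only [LinearMap.mem_ker, hφ, LinearMap.comp_apply, LinearMap.restrictScalars_apply,
        Submodule.mkQ_apply, Submodule.Quotient.mk_eq_zero, hμ, LinearMap.coe_mk,
        AddHom.coe_mk, hNdef, Submodule.mem_comap, Submodule.coe_subtype]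
      exact hσ_act a ha
    set f0 : DeltaQuot F A 𝒜 I H i →ₗ[F] (↥(Vs (↑s + 1)) ⧸ N) :=
      (Submodule.liftQ _ φ hker).comp
        (Submodule.Quotient.restrictScalarsEquiv F (hgtIdeal F A 𝒜 I H i)).symm.toLinearMap
      with hf0
    have f0_mk : ∀ a : A, f0 (Submodule.Quotient.mk a) =
        Submodule.Quotient.mk (⟨sigmaMap F A 𝒜 δ a • v s, hsmem a⟩ : ↥(Vs (↑s + 1))) := by
      intro a
      simp [hf0, Submodule.Quotient.restrictScalarsEquiv_symm_mk, Submodule.liftQ_apply, hφ, hμ]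
    set f := f0.comp ((stdDelta F A 𝒜 I H i).subtype.restrictScalars F) with hf
    have f_apply : ∀ x : ↥(stdDelta F A 𝒜 I H i), f x = f0 (x : DeltaQuot F A 𝒜 I H i) := by
      intro x; rfl
    refine ⟨f, ?_, ?_, ?_⟩
    · -- surjectivity
      intro q
      obtain ⟨w, rfl⟩ := Submodule.Quotient.mk_surjective _ q
      have hset : {r : Fin t | (↑r:ℕ) < ↑s + 1} = {r : Fin t | (↑r:ℕ) < ↑s} ∪ {s} := by
        ext r
        simp only [Set.mem_setOf_eq, Set.mem_union, Set.mem_singleton_iff,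
          Nat.lt_succ_iff_lt_or_eq]
        constructor
        · rintro (h | h)
          · exact Or.inl h
          · exact Or.inr (Fin.ext h)
        · rintro (h | h)
          · exact Or.inl h
          · exact Or.inr (by rw [h])
      have hsplit : Vs (↑s + 1) = Vs ↑s ⊔ Submodule.span A {v s} := by
        rw [hVs, hVs, hset, Set.image_union, Set.image_singleton, Submodule.span_union]
      have hw : (w : V) ∈ Vs ↑s ⊔ Submodule.span A {v s} := hsplit ▸ w.2
      obtain ⟨u, hu, z, hz, hwz⟩ := Submodule.mem_sup.1 hw
      obtain ⟨a, rfl⟩ := Submodule.mem_span_singleton.1 hz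
      set b := sgn F δ εe • sigmaMap F A 𝒜 δ a with hb
      have hbmem : (Submodule.Quotient.mk (b * H.e i) : DeltaQuot F A 𝒜 I H i)
          ∈ stdDelta F A 𝒜 I H i := by
        have : (Submodule.Quotient.mk (b * H.e i) : DeltaQuot F A 𝒜 I H i)
            = b • (Submodule.Quotient.mk (H.e i) : DeltaQuot F A 𝒜 I H i) := by
          rw [← Submodule.Quotient.mk_smul, smul_eq_mul]
        rw [stdDelta, this]
        exact Submodule.smul_mem _ _ (Submodule.subset_span rfl)
      refine ⟨⟨Submodule.Quotient.mk (b * H.e i), hbmem⟩, ?_⟩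
      rw [f_apply, f0_mk]
      have hσb : sigmaMap F A 𝒜 δ (b * H.e i) = a * H.e i := by
        rw [sigmaMap_mul, hb, map_smul, sigmaMap_sigmaMap, sigmaMap_of_mem F A 𝒜 hεe,
          smul_mul_assoc, mul_smul_comm, smul_smul, sgn_sq, one_smul]
      rw [Submodule.Quotient.eq]
      simp only [hNdef, Submodule.mem_comap, Submodule.coe_subtype, AddSubgroupClass.coe_sub]
      rw [hσb]
      have heq2 : (a * H.e i) • v s - (w : V) = a • (H.e i • v s - v s) - u := by
        rw [← hwz, mul_smul, smul_sub]
        abel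
      rw [heq2]
      exact Submodule.sub_mem _ (Submodule.smul_mem _ _ (h2 s).1) hu
    · -- grading
      intro ε x hx
      obtain ⟨a, ha, hax⟩ := hx
      refine ⟨sgn F δ ε • (a • v s), ?_, ?_, ?_⟩
      · exact Submodule.smul_mem _ _ (hact ε δ a (v s) ha (hv_homog s))
      · exact hFsmul _ _ _ (Submodule.smul_mem _ _ hvmem)
      · rw [f_apply, ← hax, f0_mk]
        congr 1
        ext
        simp [sigmaMap_of_mem F A 𝒜 ha, smul_assoc]
    · -- super-linearity
      intro ε a ha x
      obtain ⟨bb, hbb⟩ := Submodule.Quotient.mk_surjective _ (x : DeltaQuot F A 𝒜 I H i)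
      have hax2 : ((a • x : ↥(stdDelta F A 𝒜 I H i)) : DeltaQuot F A 𝒜 I H i)
          = Submodule.Quotient.mk (a * bb) := by
        rw [← smul_eq_mul, Submodule.Quotient.mk_smul, hbb]
        rfl
      rw [f_apply, f_apply, hax2, ← hbb, f0_mk, f0_mk]
      have hσab : sigmaMap F A 𝒜 δ (a * bb)
          = sgn F δ ε • (a * sigmaMap F A 𝒜 δ bb) := by
        rw [sigmaMap_mul, sigmaMap_of_mem F A 𝒜 ha, smul_mul_assoc]
      have hmksmul : (Submodule.Quotient.mk
            (⟨sigmaMap F A 𝒜 δ (a * bb) • v s, hsmem _⟩ : ↥(Vs (↑s + 1)))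
            : ↥(Vs (↑s + 1)) ⧸ N)
          = sgn F δ ε • a • Submodule.Quotient.mk
            (⟨sigmaMap F A 𝒜 δ bb • v s, hsmem _⟩ : ↥(Vs (↑s + 1))) := by
        rw [← Submodule.Quotient.mk_smul, ← Submodule.Quotient.mk_smul]
        congr 1
        ext
        simp only [SetLike.val_smul, SetLike.val_smul_of_tower]
        rw [hσab, smul_assoc, mul_smul]
      rw [hmksmul]
      by_cases hc : ε * δ = 1
      · rw [if_pos hc, show sgn F δ ε = -1 from by simp [sgn, hc], neg_smul, one_smul]
      · rw [if_neg hc, show sgn F δ ε = 1 from by simp [sgn, hc], one_smul]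
  -- finite-dimensionality of A
  have hBfin : Set.Finite {a : A | ∃ i, ∃ x ∈ H.X i, ∃ y ∈ H.Y i, a = x * y} := by
    have hsub : {a : A | ∃ i, ∃ x ∈ H.X i, ∃ y ∈ H.Y i, a = x * y} ⊆
        Set.range (fun p : Σ i : I, {q : A × A // q ∈ H.X i ×ˢ H.Y i} => p.2.1.1 * p.2.1.2) := by
      rintro a ⟨i, x, hx, y, hy, rfl⟩
      exact ⟨⟨i, ⟨(x, y), Finset.mem_product.2 ⟨hx, hy⟩⟩⟩, rfl⟩
    exact Set.Finite.subset (Set.finite_range _) hsub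
  haveI hAfin : FiniteDimensional F A :=
    ⟨⟨hBfin.toFinset, by rw [hBfin.coe_toFinset]; exact H.basis_span⟩⟩
  have finDQ : ∀ j : I, FiniteDimensional F (DeltaQuot F A 𝒜 I H j) := fun j =>
    Module.Finite.equiv (Submodule.Quotient.restrictScalarsEquiv F (hgtIdeal F A 𝒜 I H j))
  have finDel : ∀ j : I, FiniteDimensional F ↥(stdDelta F A 𝒜 I H j) := by
    intro j
    haveI := finDQ j
    exact Module.Finite.equiv
      ((Submodule.restrictScalarsEquiv F A (DeltaQuot F A 𝒜 I H j)
        (stdDelta F A 𝒜 I H j)).restrictScalars F)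
  have finVs : ∀ n : ℕ, FiniteDimensional F ↥(Vs n) :=
    fun n => Module.Finite.equiv
      ((Submodule.restrictScalarsEquiv F A V (Vs n)).restrictScalars F)
  -- monotonicity
  have hle : ∀ n : ℕ, Vs n ≤ Vs (n + 1) := by
    intro n
    rw [hVs, hVs]
    exact Submodule.span_mono (Set.image_mono (fun r hr => Nat.lt_succ_of_lt hr))
  -- step formula
  have hstep : ∀ s : Fin t,
      Module.finrank F ↥(Vs (↑s + 1)) = Module.finrank F ↥(Vs ↑s) +
        Module.finrank F (↥(Vs (s + 1)) ⧸ Submodule.comap (Vs (s + 1)).subtype (Vs s)) := by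
    intro s
    haveI := finVs (↑s + 1)
    set N := Submodule.comap (Vs (↑s + 1)).subtype (Vs ↑s) with hNdef
    have eq1 := Submodule.finrank_quotient_add_finrank (N.restrictScalars F)
    have e1 : Module.finrank F (↥(Vs (↑s + 1)) ⧸ N.restrictScalars F)
        = Module.finrank F (↥(Vs (↑s + 1)) ⧸ N) :=
      LinearEquiv.finrank_eq (Submodule.Quotient.restrictScalarsEquiv F N)
    have e2 : Module.finrank F ↥(N.restrictScalars F) = Module.finrank F ↥(Vs ↑s) :=
      LinearEquiv.finrank_eq
        (((Submodule.restrictScalarsEquiv F A ↥(Vs (↑s + 1)) N).restrictScalars F).trans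
          ((Submodule.comapSubtypeEquivOfLe (hle ↑s)).restrictScalars F))
    rw [e1, e2] at eq1
    omega
  -- telescoping
  set D : ℕ → ℕ := fun n =>
    if h : n < t then
      Module.finrank F (↥(Vs (n + 1)) ⧸
        Submodule.comap (Vs (n + 1)).subtype (Vs n))
    else 0 with hD
  have htel : ∀ n : ℕ, n ≤ t → Module.finrank F ↥(Vs n) = ∑ k ∈ Finset.range n, D k := by
    intro n
    induction n with
    | zero =>
      intro _
      rw [Finset.range_zero, Finset.sum_empty]
      have hbot : Vs 0 = ⊥ := by
        rw [hVs]
        have : {r : Fin t | (↑r : ℕ) < 0} = ∅ := by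
          ext r; simp
        rw [this, Set.image_empty, Submodule.span_empty]
      rw [hbot]
      exact Module.finrank_zero_of_subsingleton
    | succ n ih =>
      intro hn
      have hnt : n < t := hn
      rw [Finset.sum_range_succ, ← ih (le_of_lt hnt)]
      have := hstep ⟨n, hnt⟩
      simp only [hD]
      rw [dif_pos hnt]
      exact this
  have hsumQ : Module.finrank F V = ∑ s : Fin t,
      Module.finrank F (↥(Vs (s + 1)) ⧸ Submodule.comap (Vs (s + 1)).subtype (Vs s)) := by
    have h4 : Module.finrank F ↥(Vs t) = Module.finrank F V := by
      rw [h1]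
      exact LinearEquiv.finrank_eq ((Submodule.topEquiv (R := A) (M := V)).restrictScalars F)
    rw [← h4, htel t le_rfl, ← Fin.sum_univ_eq_sum_range D t]
    refine Finset.sum_congr rfl ?_
    intro s _
    simp only [hD]
    rw [dif_pos s.isLt]
  -- surjectivity gives an inequality of dimensions
  have hrank_le : ∀ s : Fin t,
      Module.finrank F (↥(Vs (s + 1)) ⧸ Submodule.comap (Vs (s + 1)).subtype (Vs s))
        ≤ Module.finrank F ↥(stdDelta F A 𝒜 I H (is s)) := by
    intro s
    obtain ⟨f, hsurj, _⟩ := main s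
    haveI := finDel (is s)
    have hr := LinearMap.finrank_range_le f
    rw [LinearMap.range_eq_top.2 hsurj, finrank_top] at hr
    exact hr
  have heq : ∀ s : Fin t,
      Module.finrank F ↥(stdDelta F A 𝒜 I H (is s)) =
        Module.finrank F (↥(Vs (s + 1)) ⧸ Submodule.comap (Vs (s + 1)).subtype (Vs s)) := by
    have hsums : (∑ s : Fin t,
        Module.finrank F (↥(Vs (s + 1)) ⧸ Submodule.comap (Vs (s + 1)).subtype (Vs s)))
        = ∑ s : Fin t, Module.finrank F ↥(stdDelta F A 𝒜 I H (is s)) := by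
      rw [← hsumQ, ← h3]
    have := (Finset.sum_eq_sum_iff_of_le (fun s _ => hrank_le s)).1 hsums
    intro s
    exact (this s (Finset.mem_univ s)).symm
  -- assemble
  intro s
  obtain ⟨f, hsurj, hsh⟩ := main s
  haveI := finDel (is s)
  haveI : FiniteDimensional F
      (↥(Vs (s + 1)) ⧸ Submodule.comap (Vs (s + 1)).subtype (Vs s)) :=
    Module.Finite.of_surjective f hsurj
  exact ⟨f, ⟨(LinearMap.injective_iff_surjective_of_finrank_eq_finrank (heq s)).2 hsurj,
    hsurj⟩, hsh⟩
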